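/- For integers i ≥ j ≥ -1, the two expressions A(i,j,t) = (1-t)^{i+2} Σ_{n≥0} t^n n^{j+1}(n+1)^{i-j} and Σ_{k=0}^{i-j} t(1-t)^{i-j-k} C(i-j, k) Eul(j+k, t) are equal as formal power series (hence both are polynomials in t). -/

import Mathlib

open Finset PowerSeries

/-- The Eulerian polynomial of degree `n`. -/
noncomputable def Eul (n : ℕ) : Polynomial ℤ :=
  ∑ i ∈ Finset.range (n + 1),
    Polynomial.C (∑ j ∈ Finset.range (i + 1),
      (-1) ^ j * (Nat.choose (n + 2) j : ℤ) * ((i : ℤ) + 1 - (j : ℤ)) ^ (n + 1)) *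
    Polynomial.X ^ i

/-- The Eulerian polynomial as a Laurent series, with the paper's convention
`Eul(-1,t) = 1/t`. -/
noncomputable def EulL (n : ℤ) : LaurentSeries ℤ :=
  if 0 ≤ n then ((Eul n.toNat : PowerSeries ℤ) : LaurentSeries ℤ)
  else HahnSeries.single (-1 : ℤ) (1 : ℤ)

/-- Pascal's rule turns an alternating binomial sum over `s+1` into a difference. -/
lemma pascal_step (s : ℕ) (f : ℤ → ℤ) (x : ℤ) :
    ∑ j ∈ range (s + 2), (-1 : ℤ) ^ j * (s + 1).choose j * f (x - j)
      = ∑ j ∈ range (s + 1), (-1 : ℤ) ^ j * s.choose j * (f (x - j) - f (x - 1 - j)) := by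
  have h1 : ∀ j, ((s + 1).choose (j + 1) : ℤ) = s.choose j + s.choose (j + 1) := by
    intro j; rw [Nat.choose_succ_succ]; push_cast; ring
  rw [Finset.sum_range_succ' (fun j => (-1 : ℤ) ^ j * (s + 1).choose j * f (x - j)) (s+1)]
  have key : ∀ j ∈ range (s + 1),
      (-1 : ℤ) ^ (j+1) * (s + 1).choose (j+1) * f (x - (j+1 : ℕ))
        = ((-1 : ℤ) ^ (j+1) * s.choose (j+1) * f (x - ((j+1 : ℕ) : ℤ)))
          - (-1 : ℤ) ^ j * s.choose j * f (x - 1 - j) := by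
    intro j _
    have hx : x - 1 - (j : ℤ) = x - ((j+1 : ℕ) : ℤ) := by push_cast; ring
    rw [hx, h1]; ring
  rw [Finset.sum_congr rfl key, Finset.sum_sub_distrib]
  simp only [mul_sub]
  rw [Finset.sum_sub_distrib]
  have hA : ∑ j ∈ range (s+1), (-1:ℤ)^j * s.choose j * f (x - j)
      = (∑ j ∈ range (s+1), (-1:ℤ)^(j+1) * s.choose (j+1) * f (x - ((j+1:ℕ):ℤ))) + f x := by
    rw [Finset.sum_range_succ (fun j => (-1:ℤ)^(j+1) * (s.choose (j+1) : ℤ) * f (x-((j+1:ℕ):ℤ))) s,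
      Nat.choose_succ_self,
      Finset.sum_range_succ' (fun j => (-1:ℤ)^j * (s.choose j : ℤ) * f (x - j)) s]
    simp
  rw [hA]
  simp
  ring

/-- The `s`-th finite difference annihilates powers of degree `< s`. -/
lemma findiff_zero (s : ℕ) : ∀ d < s, ∀ x : ℤ,
    ∑ j ∈ range (s + 1), (-1 : ℤ) ^ j * s.choose j * (x - j) ^ d = 0 := by
  induction s with
  | zero => omega
  | succ s ih =>
    intro d hd x
    have h2 : s + 1 + 1 = s + 2 := rfl
    rw [h2, pascal_step s (fun y => y ^ d) x]
    have expand : ∀ j ∈ range (s + 1), (x - (j:ℤ)) ^ d - (x - 1 - j) ^ d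
        = ∑ e ∈ range d, (d.choose e : ℤ) * ((x - 1 - j) ^ e) := by
      intro j _
      have hb : (x - (j:ℤ)) = (x - 1 - j) + 1 := by ring
      rw [hb, add_pow, Finset.sum_range_succ]
      simp only [one_pow, mul_one, Nat.choose_self, Nat.cast_one]
      rw [add_sub_cancel_right]
      exact Finset.sum_congr rfl fun e _ => by ring
    rw [Finset.sum_congr rfl (fun j hj => by rw [expand j hj])]
    simp only [Finset.mul_sum]
    rw [Finset.sum_comm]
    apply Finset.sum_eq_zero
    intro e he
    have h0 := ih e (by simp at he; omega) (x - 1)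
    calc ∑ j ∈ range (s+1), (-1:ℤ)^j * s.choose j * ((d.choose e : ℤ) * (x - 1 - j)^e)
        = (d.choose e : ℤ) * ∑ j ∈ range (s+1), (-1:ℤ)^j * s.choose j * ((x - 1) - j)^e := by
          rw [Finset.mul_sum]; exact Finset.sum_congr rfl fun j _ => by ring
      _ = 0 := by rw [h0, mul_zero]

lemma one_sub_X_pow_eq (s : ℕ) :
    ((1 - X : PowerSeries ℤ)) ^ s
      = ∑ j ∈ range (s + 1), PowerSeries.C (R := ℤ) ((-1)^j * (s.choose j : ℤ)) * X ^ j := by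
  rw [sub_eq_add_neg, add_comm, add_pow]
  refine Finset.sum_congr rfl fun j hj => ?_
  rw [neg_pow]
  simp [mul_comm, mul_assoc, mul_left_comm]

lemma coeff_one_sub_X_pow (s k : ℕ) :
    PowerSeries.coeff (R := ℤ) k ((1 - X) ^ s) = (-1) ^ k * (s.choose k : ℤ) := by
  rw [one_sub_X_pow_eq, map_sum]
  simp only [PowerSeries.coeff_C_mul, PowerSeries.coeff_X_pow]
  rw [Finset.sum_eq_single k]
  · simp
  · intro b _ hbk; simp [Ne.symm hbk]
  · intro hk
    simp at hk
    simp [Nat.choose_eq_zero_of_lt hk]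

lemma coeff_eul (n N : ℕ) :
    Polynomial.coeff (∑ i ∈ Finset.range (n + 1),
      Polynomial.C (∑ j ∈ Finset.range (i + 1),
        (-1) ^ j * (Nat.choose (n + 2) j : ℤ) * ((i : ℤ) + 1 - (j : ℤ)) ^ (n + 1)) *
      Polynomial.X ^ i) N
    = if N ≤ n then ∑ j ∈ Finset.range (N + 1),
        (-1) ^ j * (Nat.choose (n + 2) j : ℤ) * ((N : ℤ) + 1 - (j : ℤ)) ^ (n + 1) else 0 := by
  rw [Polynomial.finset_sum_coeff]
  simp only [Polynomial.coeff_C_mul, Polynomial.coeff_X_pow]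
  by_cases h : N ≤ n
  · rw [if_pos h, Finset.sum_eq_single N (fun b _ hbN => by simp [Ne.symm hbN])
      (fun hN => absurd (Finset.mem_range.mpr (by omega)) hN)]
    simp
  · rw [if_neg h]
    apply Finset.sum_eq_zero
    intro i hi
    simp only [Finset.mem_range] at hi
    simp [show N ≠ i by omega]

/-- Worpitzky-type identity: `(1-X)^(n+2) ∑ m^(n+1) X^m = X · Eul n`. -/
theorem worpitzky (n : ℕ) :
    (1 - X) ^ (n + 2) * PowerSeries.mk (fun m : ℕ => (m : ℤ) ^ (n + 1))
      = X * (Eul n : PowerSeries ℤ) := by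
  ext N
  rw [PowerSeries.coeff_mul, Finset.Nat.sum_antidiagonal_eq_sum_range_succ_mk]
  simp only [coeff_one_sub_X_pow, PowerSeries.coeff_mk]
  cases N with
  | zero => simp
  | succ M =>
    rw [PowerSeries.coeff_succ_X_mul, Polynomial.coeff_coe, Eul, coeff_eul]
    by_cases h : M ≤ n
    · rw [if_pos h, Finset.sum_range_succ]
      rw [show M + 1 - (M + 1) = 0 from Nat.sub_self _]
      simp only [Nat.cast_zero, zero_pow (Nat.succ_ne_zero n), mul_zero, add_zero]
      refine Finset.sum_congr rfl fun j hj => ?_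
      simp only [Finset.mem_range] at hj
      congr 1
      rw [Nat.cast_sub (by omega)]
      push_cast; ring
    · rw [if_neg h]
      have hsub : range (n + 3) ⊆ range (M + 1 + 1) := by
        intro a ha; simp at ha ⊢; omega
      rw [← Finset.sum_subset hsub (fun j hj hj2 => by
        simp only [Finset.mem_range] at hj hj2
        rw [Nat.choose_eq_zero_of_lt (by omega)]
        simp)]
      have h0 := findiff_zero (n + 2) (n + 1) (by omega) ((M : ℤ) + 1)
      rw [← h0]
      refine Finset.sum_congr rfl fun j hj => ?_
      simp only [Finset.mem_range] at hj
      congr 1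
      rw [Nat.cast_sub (by omega)]
      push_cast; ring

theorem geom : (1 - X) * PowerSeries.mk (fun _ : ℕ => (1 : ℤ)) = 1 := by
  ext N
  rw [sub_mul, one_mul, map_sub]
  cases N with
  | zero => simp
  | succ M => simp [PowerSeries.coeff_succ_X_mul]

/-- Auxiliary power series `(1-X)^(r+1) ∑ n^r X^n`. -/
noncomputable def W (r : ℕ) : PowerSeries ℤ :=
  (1 - X) ^ (r + 1) * PowerSeries.mk (fun n : ℕ => (n : ℤ) ^ r)

lemma W_zero : W 0 = 1 := by
  simpa [W] using geom

lemma W_succ (r : ℕ) : W (r + 1) = X * (Eul r : PowerSeries ℤ) := by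
  simpa [W, show r + 1 + 1 = r + 2 from rfl] using worpitzky r

lemma main_ps (e m : ℕ) :
    (1 - X) ^ (e + m + 1) * PowerSeries.mk (fun n : ℕ => (n : ℤ) ^ e * ((n : ℤ) + 1) ^ m)
      = ∑ k ∈ range (m + 1),
          (1 - X) ^ (m - k) * PowerSeries.C (R := ℤ) (m.choose k : ℤ) * W (e + k) := by
  have hmk : PowerSeries.mk (fun n : ℕ => (n : ℤ) ^ e * ((n : ℤ) + 1) ^ m)
      = ∑ k ∈ range (m + 1),
          PowerSeries.C (R := ℤ) (m.choose k : ℤ) * PowerSeries.mk (fun n : ℕ => (n : ℤ) ^ (e + k)) := by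
    ext N
    rw [map_sum]
    simp only [PowerSeries.coeff_C_mul, PowerSeries.coeff_mk]
    rw [add_pow, Finset.mul_sum]
    exact Finset.sum_congr rfl fun k _ => by rw [pow_add]; ring
  rw [hmk, Finset.mul_sum]
  refine Finset.sum_congr rfl fun k hk => ?_
  simp only [Finset.mem_range] at hk
  have h : e + m + 1 = (m - k) + (e + k + 1) := by omega
  rw [h, pow_add, W]; ring

/-- For integers `i ≥ j ≥ -1`, the two expressions
`A(i,j,t) = (1-t)^{i+2} ∑_{n≥0} t^n n^{j+1} (n+1)^{i-j}` and
`∑_{k=0}^{i-j} t (1-t)^{i-j-k} C(i-j,k) Eul(j+k,t)` are equal. -/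
theorem A_two_expressions (i j : ℤ) (hj : -1 ≤ j) (hij : j ≤ i) :
    (((1 - PowerSeries.X) ^ (i + 2).toNat *
        PowerSeries.mk (fun n : ℕ =>
          (n : ℤ) ^ (j + 1).toNat * ((n : ℤ) + 1) ^ (i - j).toNat) :
        PowerSeries ℤ) : LaurentSeries ℤ)
      = ∑ k ∈ Finset.range ((i - j).toNat + 1),
          ((PowerSeries.X : PowerSeries ℤ) : LaurentSeries ℤ) *
            (((1 - PowerSeries.X) ^ ((i - j).toNat - k) : PowerSeries ℤ) : LaurentSeries ℤ) *
            (Nat.choose (i - j).toNat k : LaurentSeries ℤ) *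
            EulL (j + k) := by
  set e := (j + 1).toNat with he
  set m := (i - j).toNat with hm
  have hi2 : (i + 2).toNat = e + m + 1 := by omega
  have hsum : ((∑ k ∈ range (m + 1),
        (1 - X) ^ (m - k) * PowerSeries.C (R := ℤ) (m.choose k : ℤ) * W (e + k) : PowerSeries ℤ) :
        LaurentSeries ℤ)
      = ∑ k ∈ range (m + 1),
          (((1 - X) ^ (m - k) * PowerSeries.C (R := ℤ) (m.choose k : ℤ) * W (e + k) : PowerSeries ℤ) :
            LaurentSeries ℤ) :=
    map_sum (HahnSeries.ofPowerSeries ℤ ℤ) _ _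
  rw [hi2, main_ps e m, hsum]
  refine Finset.sum_congr rfl fun k hk => ?_
  simp only [Finset.mem_range] at hk
  by_cases hjk : 0 ≤ j + (k : ℤ)
  · have hek : e + k = (j + (k : ℤ)).toNat + 1 := by omega
    rw [EulL, if_pos hjk, hek, W_succ, map_natCast (PowerSeries.C (R := ℤ))]
    push_cast [PowerSeries.coe_mul, PowerSeries.coe_pow, PowerSeries.coe_sub,
      PowerSeries.coe_one]
    rw [map_natCast (HahnSeries.ofPowerSeries ℤ ℤ)]
    ring
  · have hj1 : j = -1 := by omega
    have hk0 : k = 0 := by omega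
    have hek : e + k = 0 := by omega
    rw [EulL, if_neg hjk, hek, W_zero, hk0, map_natCast (PowerSeries.C (R := ℤ))]
    simp only [Nat.sub_zero, Nat.choose_zero_right, Nat.cast_one, mul_one, map_mul, map_one]
    rw [HahnSeries.ofPowerSeries_X]
    have h1 : (HahnSeries.single (1:ℤ) (1:ℤ)) * HahnSeries.single (-1:ℤ) (1:ℤ) = 1 := by
      rw [HahnSeries.single_mul_single]; norm_num [HahnSeries.single_zero_one]
    rw [mul_comm (HahnSeries.single (1:ℤ) (1:ℤ)), mul_assoc, h1, mul_one]
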